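/- Let E = {1,2,3}×{a,b}, partitioned into the three classes ω_i = {(i,a),(i,b)} for i = 1,2,3, and let 𝒞 = {{(1,a),(2,b),(3,b)}, {(1,b),(2,a),(3,b)}, {(1,b),(2,b),(3,a)}}. There is no binary matroid M on ground set E such that for every transversal T of the partition (a set containing exactly one element of each class ω_i), the circuits of M contained in T are exactly the members of 𝒞 that are subsets of T. -/

import Mathlib

open Matrix

noncomputable section

/-- The columns of `M` indexed by `S` are linearly independent over `F`. -/
def ColIndep (F : Type*) [Field F] {m n : Type*} (M : Matrix m n F) (S : Set n) : Prop :=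
  LinearIndependent F (fun j : S => (fun i => M i (j : n)))


/-- `C` is a circuit (minimal dependent set) of the column matroid of `P`. -/
def IsCircuitOf {k : ℕ} (P : Matrix (Fin k) (Fin 3 × Fin 2) (ZMod 2))
    (C : Set (Fin 3 × Fin 2)) : Prop :=
  ¬ ColIndep (ZMod 2) P C ∧ ∀ C' : Set (Fin 3 × Fin 2), C' ⊂ C → ColIndep (ZMod 2) P C'

namespace AuxNBSM

variable {α : Type*} [DecidableEq α]

/-- equiv from `Fin 3` onto an explicit 3-element set. -/
def e3 (x y z : α) (hxy : x ≠ y) (hxz : x ≠ z) (hyz : y ≠ z) :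
    Fin 3 ≃ ({x, y, z} : Set α) :=
  Equiv.ofBijective (![⟨x, by simp⟩, ⟨y, by simp⟩, ⟨z, by simp⟩])
    ⟨by
      intro i j h
      fin_cases i <;> fin_cases j <;> simp_all [Subtype.ext_iff],
     by
      rintro ⟨p, hp⟩
      simp only [Set.mem_insert_iff, Set.mem_singleton_iff] at hp
      rcases hp with rfl | rfl | rfl
      · exact ⟨0, rfl⟩
      · exact ⟨1, rfl⟩
      · exact ⟨2, rfl⟩⟩

/-- equiv from `Fin 2` onto an explicit 2-element set. -/
def e2 (x y : α) (hxy : x ≠ y) : Fin 2 ≃ ({x, y} : Set α) :=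
  Equiv.ofBijective (![⟨x, by simp⟩, ⟨y, by simp⟩])
    ⟨by
      intro i j h
      fin_cases i <;> fin_cases j <;> simp_all [Subtype.ext_iff],
     by
      rintro ⟨p, hp⟩
      simp only [Set.mem_insert_iff, Set.mem_singleton_iff] at hp
      rcases hp with rfl | rfl
      · exact ⟨0, rfl⟩
      · exact ⟨1, rfl⟩⟩

variable {k : ℕ} (P : Matrix (Fin k) (Fin 3 × Fin 2) (ZMod 2))

/-- the column of `P` at index `x`. -/
def col (x : Fin 3 × Fin 2) : Fin k → ZMod 2 := fun i => P i x

lemma colIndep_iff_three (x y z : Fin 3 × Fin 2) (hxy : x ≠ y) (hxz : x ≠ z) (hyz : y ≠ z) :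
    ColIndep (ZMod 2) P {x, y, z} ↔
      LinearIndependent (ZMod 2) ![col P x, col P y, col P z] := by
  unfold ColIndep
  rw [← linearIndependent_equiv (e3 x y z hxy hxz hyz)]
  congr! 1
  funext i
  fin_cases i <;> rfl

lemma colIndep_iff_two (x y : Fin 3 × Fin 2) (hxy : x ≠ y) :
    ColIndep (ZMod 2) P {x, y} ↔
      LinearIndependent (ZMod 2) ![col P x, col P y] := by
  unfold ColIndep
  rw [← linearIndependent_equiv (e2 x y hxy)]
  congr! 1
  funext i
  fin_cases i <;> rfl

lemma circuit_three_sum (x y z : Fin 3 × Fin 2) (hxy : x ≠ y) (hxz : x ≠ z) (hyz : y ≠ z)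
    (h : IsCircuitOf P {x, y, z}) :
    col P x + col P y + col P z = 0 := by
  obtain ⟨hdep, hmin⟩ := h
  rw [colIndep_iff_three P x y z hxy hxz hyz] at hdep
  obtain ⟨g, hsum, i, hi⟩ := Fintype.not_linearIndependent_iff.mp hdep
  simp only [Fin.sum_univ_three, Matrix.cons_val_zero, Matrix.cons_val_one, Matrix.head_cons,
    Matrix.cons_val_two, Matrix.tail_cons] at hsum
  -- pair independences
  have pyz : LinearIndependent (ZMod 2) ![col P y, col P z] := by
    rw [← colIndep_iff_two P y z hyz]
    refine hmin _ ⟨?_, fun hsub => ?_⟩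
    · intro p hp
      simp only [Set.mem_insert_iff, Set.mem_singleton_iff] at hp ⊢
      tauto
    · have := hsub (Set.mem_insert x _)
      simp only [Set.mem_insert_iff, Set.mem_singleton_iff] at this
      tauto
  have pxz : LinearIndependent (ZMod 2) ![col P x, col P z] := by
    rw [← colIndep_iff_two P x z hxz]
    refine hmin _ ⟨?_, fun hsub => ?_⟩
    · intro p hp
      simp only [Set.mem_insert_iff, Set.mem_singleton_iff] at hp ⊢
      tauto
    · have := hsub (by simp : y ∈ ({x, y, z} : Set (Fin 3 × Fin 2)))
      simp only [Set.mem_insert_iff, Set.mem_singleton_iff] at this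
      tauto
  have pxy : LinearIndependent (ZMod 2) ![col P x, col P y] := by
    rw [← colIndep_iff_two P x y hxy]
    refine hmin _ ⟨?_, fun hsub => ?_⟩
    · intro p hp
      simp only [Set.mem_insert_iff, Set.mem_singleton_iff] at hp ⊢
      tauto
    · have := hsub (by simp : z ∈ ({x, y, z} : Set (Fin 3 × Fin 2)))
      simp only [Set.mem_insert_iff, Set.mem_singleton_iff] at this
      tauto
  have two : ∀ a : ZMod 2, a = 0 ∨ a = 1 := by decide
  have hg0 : g 0 = 1 := by
    rcases two (g 0) with h0 | h0
    · exfalso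
      have := Fintype.linearIndependent_iff.mp pyz ![g 1, g 2] (by
        simpa [Fin.sum_univ_two, h0] using hsum)
      have h1 := this 0
      have h2 := this 1
      simp only [Matrix.cons_val_zero, Matrix.cons_val_one, Matrix.head_cons] at h1 h2
      fin_cases i <;> simp_all
    · exact h0
  have hg1 : g 1 = 1 := by
    rcases two (g 1) with h1 | h1
    · exfalso
      have := Fintype.linearIndependent_iff.mp pxz ![g 0, g 2] (by
        simpa [Fin.sum_univ_two, h1] using hsum)
      have h0 := this 0
      simp only [Matrix.cons_val_zero] at h0
      rw [hg0] at h0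
      exact one_ne_zero h0
    · exact h1
  have hg2 : g 2 = 1 := by
    rcases two (g 2) with h2 | h2
    · exfalso
      have := Fintype.linearIndependent_iff.mp pxy ![g 0, g 1] (by
        simpa [Fin.sum_univ_two, h2] using hsum)
      have h0 := this 0
      simp only [Matrix.cons_val_zero] at h0
      rw [hg0] at h0
      exact one_ne_zero h0
    · exact h2
  rw [hg0, hg1, hg2, one_smul, one_smul, one_smul] at hsum
  exact hsum

end AuxNBSM

open AuxNBSM in
/-- There is no binary matroid on `E = Fin 3 × Fin 2` whose circuits contained in any
transversal of the partition `{{(i,0),(i,1)}}` are exactly the members of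
`𝒞 = {{(0,0),(1,1),(2,1)}, {(0,1),(1,0),(2,1)}, {(0,1),(1,1),(2,0)}}` contained in
that transversal. -/
theorem no_binary_sheltering_matroid :
    ¬ ∃ (k : ℕ) (P : Matrix (Fin k) (Fin 3 × Fin 2) (ZMod 2)),
      ∀ (t : Fin 3 → Fin 2) (C : Set (Fin 3 × Fin 2)),
        (∀ p ∈ C, p.2 = t p.1) →
        (IsCircuitOf P C ↔
          C ∈ ({ {(0,0),(1,1),(2,1)}, {(0,1),(1,0),(2,1)}, {(0,1),(1,1),(2,0)} } :
            Set (Set (Fin 3 × Fin 2)))) := by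
  rintro ⟨k, P, h⟩
  -- the three circuits
  have hC1 : IsCircuitOf P {(0,0),(1,1),(2,1)} := by
    refine (h ![0,1,1] _ ?_).mpr (by left; rfl)
    intro p hp
    simp only [Set.mem_insert_iff, Set.mem_singleton_iff] at hp
    rcases hp with rfl | rfl | rfl <;> rfl
  have hC2 : IsCircuitOf P {(0,1),(1,0),(2,1)} := by
    refine (h ![1,0,1] _ ?_).mpr (by right; left; rfl)
    intro p hp
    simp only [Set.mem_insert_iff, Set.mem_singleton_iff] at hp
    rcases hp with rfl | rfl | rfl <;> rfl
  have hC3 : IsCircuitOf P {(0,1),(1,1),(2,0)} := by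
    refine (h ![1,1,0] _ ?_).mpr (by right; right; rfl)
    intro p hp
    simp only [Set.mem_insert_iff, Set.mem_singleton_iff] at hp
    rcases hp with rfl | rfl | rfl <;> rfl
  have eq1 := circuit_three_sum P _ _ _ (by decide) (by decide) (by decide) hC1
  have eq2 := circuit_three_sum P _ _ _ (by decide) (by decide) (by decide) hC2
  have eq3 := circuit_three_sum P _ _ _ (by decide) (by decide) (by decide) hC3
  -- the all-zero transversal is dependent
  have key : ∀ a b c d e f : ZMod 2,
      a + d + f = 0 → b + c + f = 0 → b + d + e = 0 → a + c + e = 0 := by decide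
  have colsum : AuxNBSM.col P (0,0) + AuxNBSM.col P (1,0) + AuxNBSM.col P (2,0) = 0 := by
    funext i
    have h1 := congrFun eq1 i
    have h2 := congrFun eq2 i
    have h3 := congrFun eq3 i
    simp only [Pi.add_apply, Pi.zero_apply] at h1 h2 h3 ⊢
    exact key _ _ _ _ _ _ h1 h2 h3
  have hdep : ¬ ColIndep (ZMod 2) P {(0,0),(1,0),(2,0)} := by
    rw [colIndep_iff_three P _ _ _ (by decide) (by decide) (by decide)]
    intro hli
    have := Fintype.linearIndependent_iff.mp hli ![1,1,1] (by
      rw [Fin.sum_univ_three]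
      simp only [Matrix.cons_val_zero, Matrix.cons_val_one, Matrix.head_cons,
        Matrix.cons_val_two, Matrix.tail_cons, one_smul]
      exact colsum)
    have h0 := this 0
    simp only [Matrix.cons_val_zero] at h0
    exact one_ne_zero h0
  -- minimal dependent subset of the all-zero transversal
  set T0 : Set (Fin 3 × Fin 2) := {(0,0),(1,0),(2,0)} with hT0
  set F : Set (Set (Fin 3 × Fin 2)) :=
    {D | D ⊆ T0 ∧ ¬ ColIndep (ZMod 2) P D} with hF
  have hFfin : F.Finite := Set.toFinite F
  have hFne : F.Nonempty := ⟨T0, le_refl _, hdep⟩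
  obtain ⟨C', hC'F, hmin⟩ : ∃ a ∈ F, ∀ a' ∈ F, id a' ≤ id a → id a = id a' := by
    obtain ⟨a, ha⟩ := hFfin.exists_minimal hFne
    exact ⟨a, ha.1, fun a' ha' hle => (le_antisymm hle (ha.2 ha' hle)).symm⟩
  obtain ⟨hC'sub, hC'dep⟩ := hC'F
  have hcirc : IsCircuitOf P C' := by
    refine ⟨hC'dep, fun D hD => ?_⟩
    by_contra hDdep
    have hDF : D ∈ F := ⟨hD.1.trans hC'sub, hDdep⟩
    have := hmin D hDF hD.1
    simp only [id] at this
    exact hD.2 (le_of_eq this)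
  have hcond : ∀ p ∈ C', p.2 = (fun _ : Fin 3 => (0 : Fin 2)) p.1 := by
    intro p hp
    have := hC'sub hp
    rw [hT0] at this
    simp only [Set.mem_insert_iff, Set.mem_singleton_iff] at this
    rcases this with rfl | rfl | rfl <;> rfl
  have := (h (fun _ => 0) C' hcond).mp hcirc
  simp only [Set.mem_insert_iff, Set.mem_singleton_iff] at this
  rcases this with rfl | rfl | rfl
  · exact absurd (hcond (1,1) (by simp)) (by decide)
  · exact absurd (hcond (0,1) (by simp)) (by decide)
  · exact absurd (hcond (0,1) (by simp)) (by decide)
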